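/- Suppose L is a higgledy-piggledy set of lines of PG(N,q) with |L| = N + ⌊N/2⌋ ≤ q. Then every ⌈(N+1)/2⌉ lines of L together span the whole space PG(N,q). -/

import Mathlib

open Module

namespace HP

variable (F : Type*) [Field F] (V : Type*) [AddCommGroup V] [Module F V]

/-- The set of points of the projective space `PG(V)` lying in a linear subspace `W`.
A projective point lies in `W` iff its representing one-dimensional subspace is below `W`. -/
def ptsIn (W : Submodule F V) : Set (Projectivization F V) := {P | P.submodule ≤ W}

/-- The linear span of a set of projective points. -/
noncomputable def spanPts (S : Set (Projectivization F V)) : Submodule F V :=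
  ⨆ P ∈ S, P.submodule

/-- `S` is a strong `k`-blocking set of an ambient projective space of projective
dimension `N`: every `(N-k)`-dimensional projective subspace `W` (i.e. linear subspace of
rank `N-k+1`) is spanned by its intersection with `S`. -/
def StrongBlock (N k : ℕ) (S : Set (Projectivization F V)) : Prop :=
  ∀ W : Submodule F V, finrank F W = N - k + 1 →
    spanPts F V (S ∩ ptsIn F V W) = W

end HP

open HP

section Aux


variable {F : Type*} [Field F] {V : Type*} [AddCommGroup V] [Module F V] [FiniteDimensional F V]

lemma aux_sup_span_finrank {W : Submodule F V} {x : V} (hx : x ∉ W) :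
    finrank F ↥(W ⊔ Submodule.span F {x}) = finrank F W + 1 := by
  have hx0 : x ≠ 0 := fun h => hx (h ▸ W.zero_mem)
  have hbot : W ⊓ Submodule.span F {x} = ⊥ := by
    rw [eq_bot_iff]
    rintro y ⟨hyW, hyS⟩
    obtain ⟨c, rfl⟩ := Submodule.mem_span_singleton.mp hyS
    rcases eq_or_ne c 0 with rfl | hc
    · simp
    · exact absurd (by rw [show x = c⁻¹ • (c • x) by
        rw [smul_smul, inv_mul_cancel₀ hc, one_smul]]; exact W.smul_mem c⁻¹ hyW) hx
  have := Submodule.finrank_sup_add_finrank_inf_eq W (Submodule.span F {x})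
  rw [hbot, finrank_bot, finrank_span_singleton hx0] at this
  omega

lemma aux_extend (W H : Submodule F V) (hWH : W ≤ H) :
    ∀ d : ℕ, finrank F W + d ≤ finrank F H →
    ∃ T : Submodule F V, W ≤ T ∧ T ≤ H ∧ finrank F T = finrank F W + d := by
  intro d
  induction d with
  | zero => exact fun _ => ⟨W, le_rfl, hWH, rfl⟩
  | succ n ih =>
    intro h
    obtain ⟨T, hWT, hTH, hT⟩ := ih (by omega)
    have hnle : ¬ H ≤ T := fun hle => by
      have := Submodule.finrank_mono hle; omega
    obtain ⟨x, hxH, hxT⟩ := SetLike.not_le_iff_exists.mp hnle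
    refine ⟨T ⊔ Submodule.span F {x}, hWT.trans le_sup_left,
      sup_le hTH (Submodule.span_le.mpr (by simpa using hxH)), ?_⟩
    rw [aux_sup_span_finrank hxT, hT]; omega

lemma aux_extend' (W H : Submodule F V) (hWH : W ≤ H) (k : ℕ) (h1 : finrank F W ≤ k)
    (h2 : k ≤ finrank F H) :
    ∃ T : Submodule F V, W ≤ T ∧ T ≤ H ∧ finrank F T = k := by
  obtain ⟨d, rfl⟩ := Nat.exists_eq_add_of_le h1
  exact aux_extend W H hWH d h2

end Aux

/-- if `L` is a higgledy-piggledy set of lines of `PG(N,q)` with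
`|L| = N + ⌊N/2⌋ ≤ q`, then every `⌈(N+1)/2⌉` lines of `L` span the whole space. -/
theorem stmt_6 (F : Type*) [Field F] [Fintype F] (N : ℕ) (hN : 1 ≤ N)
    (L : Set (Submodule F (Fin (N + 1) → F)))
    (hdim : ∀ ℓ ∈ L, finrank F ℓ = 2)
    (hL : StrongBlock F (Fin (N + 1) → F) N 1 (⋃ ℓ ∈ L, ptsIn F (Fin (N + 1) → F) ℓ))
    (hcard : L.ncard = N + N / 2) (hq : N + N / 2 ≤ Fintype.card F) :
    ∀ L' ⊆ L, L'.ncard = (N + 2) / 2 → (⨆ ℓ ∈ L', ℓ) = ⊤ := by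
  intro L' hsub hcard'
  classical
  by_contra hne
  have hVrank : finrank F (Fin (N + 1) → F) = N + 1 := Module.finrank_fin_fun F
  -- finiteness of L
  have hLfin : L.Finite := by
    by_contra h
    have := Set.Infinite.ncard h
    omega
  have hdfin : (L \ L').Finite := hLfin.diff
  have hdcard : (L \ L').ncard = N - 1 := by
    rw [Set.ncard_diff hsub (hLfin.subset hsub), hcard, hcard']; omega
  -- the span of L' is proper; find hyperplane H above it
  have hP0rank : finrank F ↥(⨆ ℓ ∈ L', (ℓ : Submodule F (Fin (N + 1) → F))) ≤ N := by
    by_contra h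
    have h1 := Submodule.finrank_le (⨆ ℓ ∈ L', (ℓ : Submodule F (Fin (N + 1) → F)))
    rw [hVrank] at h1
    exact hne (Submodule.eq_top_of_finrank_eq (by rw [hVrank]; omega))
  obtain ⟨H, hP0H, -, hHrank⟩ := aux_extend' (⨆ ℓ ∈ L', (ℓ : Submodule F (Fin (N + 1) → F)))
    ⊤ le_top N hP0rank (by rw [finrank_top, hVrank]; omega)
  -- choose a nonzero point on ℓ ⊓ H for each remaining line
  set f : Submodule F (Fin (N + 1) → F) → (Fin (N + 1) → F) := fun ℓ =>
    if h : ∃ x ∈ ℓ ⊓ H, x ≠ 0 then h.choose else 0 with hf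
  have hfspec : ∀ ℓ ∈ L \ L', f ℓ ∈ ℓ ⊓ H ∧ f ℓ ≠ 0 := by
    intro ℓ hℓ
    have hex : ∃ x ∈ ℓ ⊓ H, x ≠ 0 := by
      rw [← Submodule.ne_bot_iff]
      intro hbot
      have hform := Submodule.finrank_sup_add_finrank_inf_eq ℓ H
      have h2 := Submodule.finrank_le (ℓ ⊔ H)
      rw [hbot, finrank_bot, hdim ℓ hℓ.1, hHrank] at hform
      rw [hVrank] at h2
      omega
    rw [hf]; simp only [dif_pos hex]
    exact hex.choose_spec
  -- the span of the chosen points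
  set s : Finset (Fin (N + 1) → F) := hdfin.toFinset.image f with hs
  have hWle : Submodule.span F (s : Set (Fin (N + 1) → F)) ≤ H := by
    rw [Submodule.span_le]
    intro x hx
    simp only [hs, Finset.coe_image, Set.mem_image, Finset.mem_coe,
      Set.Finite.mem_toFinset] at hx
    obtain ⟨ℓ, hℓ, rfl⟩ := hx
    exact ((hfspec ℓ hℓ).1).2
  have hWrank : finrank F ↥(Submodule.span F (s : Set (Fin (N + 1) → F))) ≤ N - 1 := by
    have h1 := finrank_span_finset_le_card (R := F) s
    have h2 : s.card ≤ hdfin.toFinset.card := by rw [hs]; exact Finset.card_image_le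
    rw [← Set.ncard_eq_toFinset_card _ hdfin, hdcard] at h2
    exact le_trans h1 h2
  -- extend to T of dimension N - 1 inside H
  obtain ⟨T, hWT, hTH, hTrank⟩ := aux_extend' (Submodule.span F (s : Set (Fin (N + 1) → F)))
    H hWle (N - 1) hWrank (by rw [hHrank]; omega)
  -- T meets every line of L
  have hTmeet : ∀ ℓ ∈ L, ℓ ⊓ T ≠ ⊥ := by
    intro ℓ hℓ
    by_cases hmem : ℓ ∈ L'
    · -- ℓ ≤ H, and T has codimension 1 in H
      have hlH : ℓ ≤ H := le_trans (le_iSup₂_of_le ℓ hmem le_rfl) hP0H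
      intro hbot
      have hform := Submodule.finrank_sup_add_finrank_inf_eq ℓ T
      have h2 : finrank F ↥(ℓ ⊔ T) ≤ N :=
        le_trans (Submodule.finrank_mono (sup_le hlH hTH)) (le_of_eq hHrank)
      rw [hbot, finrank_bot, hdim ℓ hℓ, hTrank] at hform
      omega
    · have hd : ℓ ∈ L \ L' := ⟨hℓ, hmem⟩
      obtain ⟨⟨h1, -⟩, h2⟩ := hfspec ℓ hd
      rw [Submodule.ne_bot_iff]
      refine ⟨f ℓ, ⟨h1, hWT (Submodule.subset_span ?_)⟩, h2⟩
      simp only [hs, Finset.coe_image, Set.mem_image, Finset.mem_coe, Set.Finite.mem_toFinset]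
      exact ⟨ℓ, hd, rfl⟩
  have hTsup : ∀ ℓ ∈ L, finrank F ↥(T ⊔ ℓ) ≤ N := by
    intro ℓ hℓ
    have hform := Submodule.finrank_sup_add_finrank_inf_eq T ℓ
    have h1 : 1 ≤ finrank F ↥(T ⊓ ℓ) := by
      rw [Nat.one_le_iff_ne_zero]
      intro h0
      have hb : T ⊓ ℓ = ⊥ := Submodule.finrank_eq_zero.mp h0
      exact hTmeet ℓ hℓ (by rwa [inf_comm] at hb)
    rw [hTrank, hdim ℓ hℓ] at hform
    omega
  -- q+1 hyperplanes over T
  have hTne : ¬ (⊤ : Submodule F (Fin (N + 1) → F)) ≤ T := fun hle => by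
    have := Submodule.finrank_mono hle; rw [hTrank, finrank_top, hVrank] at this; omega
  obtain ⟨u, -, huT⟩ := SetLike.not_le_iff_exists.mp hTne
  have hT1ne : ¬ (⊤ : Submodule F (Fin (N + 1) → F)) ≤ T ⊔ Submodule.span F {u} := fun hle => by
    have := Submodule.finrank_mono hle
    rw [aux_sup_span_finrank huT, hTrank, finrank_top, hVrank] at this; omega
  obtain ⟨v, -, hvT1⟩ := SetLike.not_le_iff_exists.mp hT1ne
  have hvT : v ∉ T := fun h => hvT1 (le_sup_left (a := T) h)
  have hucvT : ∀ c : F, u + c • v ∉ T := by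
    intro c hmm
    rcases eq_or_ne c 0 with rfl | hc
    · simp at hmm; exact huT hmm
    · have h1 : u + c • v ∈ T ⊔ Submodule.span F {u} := le_sup_left (a := T) hmm
      have h2 : u ∈ T ⊔ Submodule.span F {u} :=
        le_sup_right (a := T) (Submodule.mem_span_singleton_self u)
      have h3 : c • v ∈ T ⊔ Submodule.span F {u} := by
        have h4 := Submodule.sub_mem _ h1 h2; simpa using h4
      have h4 : v ∈ T ⊔ Submodule.span F {u} := by
        have h5 := Submodule.smul_mem _ c⁻¹ h3
        rwa [smul_smul, inv_mul_cancel₀ hc, one_smul] at h5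
      exact hvT1 h4
  -- the key impossibility: no N-dimensional K over T contains both u and v
  have huvK : ∀ K : Submodule F (Fin (N + 1) → F),
      finrank F K = N → T ≤ K → u ∈ K → v ∈ K → False := by
    intro K hK hTK huK hvK
    have hbig : T ⊔ Submodule.span F {u} ⊔ Submodule.span F {v} ≤ K := by
      refine sup_le (sup_le hTK ?_) ?_ <;> rw [Submodule.span_le] <;> simp [huK, hvK]
    have hm := Submodule.finrank_mono hbig
    rw [aux_sup_span_finrank hvT1, aux_sup_span_finrank huT, hTrank, hK] at hm
    omega
  -- the family of hyperplanes through T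
  set g : Option F → Submodule F (Fin (N + 1) → F) := fun o =>
    match o with
    | none => T ⊔ Submodule.span F {v}
    | some c => T ⊔ Submodule.span F {u + c • v} with hg
  have hgrank : ∀ o, finrank F ↥(g o) = N := by
    intro o
    match o with
    | none =>
      show finrank F ↥(T ⊔ Submodule.span F {v}) = N
      rw [aux_sup_span_finrank hvT, hTrank]; omega
    | some c =>
      show finrank F ↥(T ⊔ Submodule.span F {u + c • v}) = N
      rw [aux_sup_span_finrank (hucvT c), hTrank]; omega
  have hgmemu : ∀ c : F, u + c • v ∈ g (some c) := fun c =>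
    le_sup_right (a := T) (Submodule.mem_span_singleton_self _)
  have hgmemv : v ∈ g none := le_sup_right (a := T) (Submodule.mem_span_singleton_self _)
  have hgT : ∀ o, T ≤ g o := by
    intro o; match o with
    | none => exact le_sup_left
    | some c => exact le_sup_left
  have hginj : Function.Injective g := by
    intro a b hab
    by_contra hne'
    have hKfalse : u ∈ g a ∧ v ∈ g a → False := fun ⟨h1, h2⟩ =>
      huvK (g a) (hgrank a) (hgT a) h1 h2
    apply hKfalse
    match a, b, hne' with
    | none, some c, _ =>
      have h1 : u + c • v ∈ g none := hab ▸ hgmemu c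
      have hu : u ∈ g none := by
        have h2 := Submodule.sub_mem _ h1 ((g none).smul_mem c hgmemv); simpa using h2
      exact ⟨hu, hgmemv⟩
    | some c, none, _ =>
      have hv : v ∈ g (some c) := hab ▸ hgmemv
      have hu : u ∈ g (some c) := by
        have h2 := Submodule.sub_mem _ (hgmemu c) ((g (some c)).smul_mem c hv)
        simpa using h2
      exact ⟨hu, hv⟩
    | some c, some c', h =>
      have hcc : c ≠ c' := fun hceq => h (by rw [hceq])
      have h1 : u + c' • v ∈ g (some c) := hab ▸ hgmemu c'
      have h2 : (c - c') • v ∈ g (some c) := by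
        have h3 := Submodule.sub_mem _ (hgmemu c) h1
        simpa [sub_smul] using h3
      have hv : v ∈ g (some c) := by
        have h3 := Submodule.smul_mem _ (c - c')⁻¹ h2
        rwa [smul_smul, inv_mul_cancel₀ (sub_ne_zero.mpr hcc), one_smul] at h3
      have hu : u ∈ g (some c) := by
        have h3 := Submodule.sub_mem _ (hgmemu c) ((g (some c)).smul_mem c hv)
        simpa using h3
      exact ⟨hu, hv⟩
    | none, none, h => exact absurd rfl h
  -- bad hyperplanes
  set B : Finset (Submodule F (Fin (N + 1) → F)) :=
    hLfin.toFinset.image (fun ℓ => T ⊔ ℓ) with hB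
  have hBcard : B.card ≤ N + N / 2 := by
    calc B.card ≤ hLfin.toFinset.card := by rw [hB]; exact Finset.card_image_le
    _ = N + N / 2 := by rw [← Set.ncard_eq_toFinset_card _ hLfin, hcard]
  have hGcard : (Finset.univ.image g).card = Fintype.card F + 1 := by
    rw [Finset.card_image_of_injective _ hginj, Finset.card_univ, Fintype.card_option]
  -- a good hyperplane exists
  have hgood : ∃ K ∈ Finset.univ.image g, K ∉ B := by
    by_contra h
    push_neg at h
    have hsub2 : Finset.univ.image g ⊆ B := h
    have hcc := Finset.card_le_card hsub2
    omega
  obtain ⟨K, hKG, hKB⟩ := hgood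
  obtain ⟨o, -, rfl⟩ := Finset.mem_image.mp hKG
  have hKrank : finrank F ↥(g o) = N := hgrank o
  have hKbad : ∀ ℓ ∈ L, g o ≠ T ⊔ ℓ := by
    intro ℓ hℓ heq
    exact hKB (Finset.mem_image.mpr ⟨ℓ, (Set.Finite.mem_toFinset hLfin).mpr hℓ, heq.symm⟩)
  -- every line's intersection with K lies in T
  have hkey : ∀ ℓ ∈ L, ℓ ⊓ g o ≤ T := by
    intro ℓ hℓ x hx
    rw [Submodule.mem_inf] at hx
    by_contra hxT
    have hxK : Submodule.span F {x} ≤ g o := Submodule.span_le.mpr (by simpa using hx.2)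
    have hle1 : T ⊔ Submodule.span F {x} ≤ g o := sup_le (hgT o) hxK
    have heq1 : T ⊔ Submodule.span F {x} = g o := by
      apply Submodule.eq_of_le_of_finrank_le hle1
      rw [hKrank, aux_sup_span_finrank hxT, hTrank]; omega
    have hle2 : g o ≤ T ⊔ ℓ := by
      rw [← heq1]
      exact sup_le le_sup_left (le_sup_right.trans' (Submodule.span_le.mpr (by simpa using hx.1)))
    have heq2 : g o = T ⊔ ℓ := by
      apply Submodule.eq_of_le_of_finrank_le hle2
      rw [hKrank]; exact hTsup ℓ hℓ
    exact hKbad ℓ hℓ heq2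
  -- strong blocking contradiction
  have hblock := hL (g o) (by rw [hKrank]; omega)
  have hspan : spanPts F (Fin (N + 1) → F)
      ((⋃ ℓ ∈ L, ptsIn F (Fin (N + 1) → F) ℓ) ∩ ptsIn F (Fin (N + 1) → F) (g o)) ≤ T := by
    rw [spanPts]
    refine iSup₂_le ?_
    rintro P ⟨hP1, hP2⟩
    rw [Set.mem_iUnion₂] at hP1
    obtain ⟨ℓ, hℓ, hPl⟩ := hP1
    have hPK : P.submodule ≤ ℓ ⊓ g o := le_inf hPl hP2
    exact hPK.trans (hkey ℓ hℓ)
  rw [hblock] at hspan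
  have hfin := Submodule.finrank_mono hspan
  rw [hKrank, hTrank] at hfin
  omega
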